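/- arXiv:1911.04134 — 2 statements merged into one kernel-verified Lean document; each statement's English description precedes it below -/
import Mathlib

section
/- Let A be a unital *-algebra, X an A-bimodule equipped with an A-bimodule involution, d : A → X a *-derivation, and ξ ∈ X an element satisfying d([a,b]) + [a,b]ξ + ξ*[a,b] = 0 for all a,b ∈ A. Define T(a) = d(a) + aξ. Then T is r-*-anti-derivable at zero: whenever a,b ∈ A satisfy ab* = 0, we have T(b)*a + b*T(a) = 0. -/
/-- If `d` is a `*`-derivation and `ξ ∈ X` satisfies
`d([a,b]) + [a,b]ξ + ξ*[a,b] = 0`, then `T a = d a + a ξ` is r-`*`-anti-derivable at zero. -/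
theorem stmt_6 {A X : Type*} [Ring A] [StarRing A] [AddCommGroup X] [StarAddMonoid X]
    [Module A X] [Module Aᵐᵒᵖ X] [SMulCommClass A Aᵐᵒᵖ X]
    (hst₁ : ∀ (a : A) (x : X), star (a • x) = MulOpposite.op (star a) • star x)
    (hst₂ : ∀ (a : A) (x : X), star (MulOpposite.op a • x) = star a • star x)
    (d : A →+ X)
    (hder : ∀ a b : A, d (a * b) = MulOpposite.op b • d a + a • d b)
    (hstar : ∀ a : A, d (star a) = star (d a))
    (ξ : X)
    (hξ : ∀ a b : A, d (a * b - b * a) + (a * b - b * a) • ξ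
      + MulOpposite.op (a * b - b * a) • star ξ = 0) :
    ∀ a b : A, a * star b = 0 →
      MulOpposite.op a • star (d b + b • ξ) + star b • (d a + a • ξ) = 0 := by
  intro a b hab
  have hd : d (star b * a) + (star b * a) • ξ
      + MulOpposite.op (star b * a) • star ξ = 0 := by
    have h1 := hξ a (star b)
    rw [hab, zero_sub, map_neg, neg_smul, MulOpposite.op_neg, neg_smul,
      ← neg_add, ← neg_add, neg_eq_zero] at h1
    exact h1
  have key : MulOpposite.op a • star (d b + b • ξ) + star b • (d a + a • ξ)
      = d (star b * a) + (star b * a) • ξ + MulOpposite.op (star b * a) • star ξ := by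
    rw [star_add, ← hstar, hst₁, smul_add, smul_add, smul_smul, smul_smul,
      ← MulOpposite.op_mul, hder]
    abel
  rw [key, hd]
end

section
/- Let A be a unital *-algebra, X an A-bimodule with an A-bimodule involution, d : A → X a *-derivation and ξ ∈ X with d([a,b]) + [a,b]ξ + ξ*[a,b] = 0 for all a,b ∈ A. Define T(a) = d(a) + aξ. Then for a,b ∈ A with ab* = 0, one has T(b)*a + b*T(a) = d([b*,a]) + ξ*[b*,a] + [b*,a]ξ, and hence T(b)*a + b*T(a) = 0. -/
/-- If `d` is a `*`-derivation and `ξ` satisfies `d([a,b]) + [a,b]ξ + ξ*[a,b] = 0` for all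
`a, b`, then for `T a = d a + a ξ` and `a b* = 0` one has
`T(b)* a + b* T(a) = d([b*,a]) + ξ*[b*,a] + [b*,a]ξ`, and hence `T(b)* a + b* T(a) = 0`. -/
theorem stmt_17 {A X : Type*} [Ring A] [StarRing A] [AddCommGroup X] [StarAddMonoid X]
    [Module A X] [Module Aᵐᵒᵖ X] [SMulCommClass A Aᵐᵒᵖ X]
    (hst₁ : ∀ (a : A) (x : X), star (a • x) = MulOpposite.op (star a) • star x)
    (hst₂ : ∀ (a : A) (x : X), star (MulOpposite.op a • x) = star a • star x)
    (d : A →+ X)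
    (hder : ∀ a b : A, d (a * b) = MulOpposite.op b • d a + a • d b)
    (hstar : ∀ a : A, d (star a) = star (d a))
    (ξ : X)
    (hξ : ∀ a b : A, d (a * b - b * a) + (a * b - b * a) • ξ
      + MulOpposite.op (a * b - b * a) • star ξ = 0) :
    ∀ a b : A, a * star b = 0 →
      (MulOpposite.op a • star (d b + b • ξ) + star b • (d a + a • ξ) =
        d (star b * a - a * star b)
          + MulOpposite.op (star b * a - a * star b) • star ξ
          + (star b * a - a * star b) • ξ) ∧
      MulOpposite.op a • star (d b + b • ξ) + star b • (d a + a • ξ) = 0 := by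
  intro a b hab
  set c := star b with hc
  have hdac : d (a * c) = 0 := by rw [hab]; simp
  have hdac' : MulOpposite.op c • d a + a • d c = 0 := by rw [← hder, hdac]
  have hmain : MulOpposite.op a • star (d b + b • ξ) + c • (d a + a • ξ) =
      d (c * a - a * c) + MulOpposite.op (c * a - a * c) • star ξ + (c * a - a * c) • ξ := by
    have h1 : star (d b + b • ξ) = d c + MulOpposite.op c • star ξ := by
      rw [star_add, hst₁, ← hstar, hc]
    rw [h1, map_sub, hder, hab]
    simp only [smul_add, smul_sub, sub_smul, map_zero, smul_zero, MulOpposite.op_zero,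
      zero_smul, zero_sub, sub_zero]
    rw [smul_smul, smul_smul, ← MulOpposite.op_mul]
    abel
  refine ⟨hmain, ?_⟩
  rw [hmain]
  have h := hξ c a
  linear_combination (norm := abel) h
end
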